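/- Let m ∈ ℕ and let s be a negative integer such that |s| is odd and m + s ≥ 0. Then for every q ∈ 𝒫_m there exists a unique p ∈ 𝒫_m such that Δ(‖x‖^s p(x)) = ‖x‖^{s−2} q(x) for all x ∈ ℝ³ with x ≠ 0; equivalently, the linear map 𝒫_m → 𝒫_m sending p to s(s+1+2m) p + ‖x‖² Δp is bijective. -/

import Mathlib

noncomputable section

/-- ℝ³ with the Euclidean norm. -/
abbrev E3 := EuclideanSpace ℝ (Fin 3)

/-- The `i`-th partial derivative of a function on ℝ³. -/
def pd (i : Fin 3) (f : E3 → ℝ) : E3 → ℝ :=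
  fun x => fderiv ℝ f x (EuclideanSpace.single i 1)

/-- The flat Laplacian on ℝ³. -/
def lap (f : E3 → ℝ) : E3 → ℝ :=
  fun x => ∑ i : Fin 3, pd i (pd i f) x

/-- `p : ℝ³ → ℝ` is (the evaluation of) a homogeneous polynomial of degree `m`
in the three coordinates. -/
def IsHomogPoly (m : ℕ) (p : E3 → ℝ) : Prop :=
  ∃ P : MvPolynomial (Fin 3) ℝ, P.IsHomogeneous m ∧
    ∀ x : E3, p x = MvPolynomial.eval (fun i => x i) P

open MvPolynomial

namespace S2

abbrev MvP := MvPolynomial (Fin 3) ℝ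

def pf (P : MvP) : E3 → ℝ := fun x => MvPolynomial.eval (fun i => x i) P

def pD (P : MvP) (x : E3) : E3 →L[ℝ] ℝ :=
  ∑ i : Fin 3, MvPolynomial.eval (fun j => x j) (MvPolynomial.pderiv i P) • EuclideanSpace.proj i

lemma hasFDerivAt_pf (P : MvP) (x : E3) : HasFDerivAt (pf P) (pD P x) x := by
  induction P using MvPolynomial.induction_on with
  | C a =>
    have h : pf (C a) = fun _ : E3 => a := by funext y; simp [pf]
    have h2 : pD (C a) x = 0 := by
      simp [pD]
    rw [h, h2]; exact hasFDerivAt_const a x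
  | add p q hp hq =>
    have h : pf (p + q) = fun y => pf p y + pf q y := by funext y; simp [pf]
    have h2 : pD (p + q) x = pD p x + pD q x := by
      simp [pD, add_smul, Finset.sum_add_distrib]
    rw [h, h2]; exact hp.add hq
  | mul_X p n hp =>
    have h : pf (p * X n) = fun y => pf p y * y n := by funext y; simp [pf]
    have hX : HasFDerivAt (fun y : E3 => y n) (EuclideanSpace.proj n : E3 →L[ℝ] ℝ) x :=
      (EuclideanSpace.proj n : E3 →L[ℝ] ℝ).hasFDerivAt
    have h2 : pD (p * X n) x = pf p x • (EuclideanSpace.proj n : E3 →L[ℝ] ℝ) + x n • pD p x := by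
      simp only [pD, Finset.smul_sum, smul_smul]
      have key : ∀ i : Fin 3,
          (eval fun j => x j) ((pderiv i) (p * X n)) • (EuclideanSpace.proj i : E3 →L[ℝ] ℝ)
          = (x n * (eval fun j => x j) ((pderiv i) p)) • (EuclideanSpace.proj i : E3 →L[ℝ] ℝ)
            + (if n = i then pf p x • (EuclideanSpace.proj i : E3 →L[ℝ] ℝ) else 0) := by
        intro i
        rcases eq_or_ne i n with h | h
        · subst h
          simp [pderiv_mul, pderiv_X_self, pf, add_smul, mul_comm, add_comm]
        · simp [pderiv_mul, pderiv_X_of_ne (Ne.symm h), pf, add_smul, mul_comm, h.symm]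
      rw [Finset.sum_congr rfl fun i _ => key i, Finset.sum_add_distrib,
        Finset.sum_ite_eq Finset.univ n
          (fun i => pf p x • (EuclideanSpace.proj i : E3 →L[ℝ] ℝ))]
      simp [add_comm]
    rw [h, h2]
    exact hp.mul hX

lemma pD_apply_single (P : MvP) (x : E3) (i : Fin 3) :
    pD P x (EuclideanSpace.single i 1) = pf (pderiv i P) x := by
  simp only [pD, ContinuousLinearMap.sum_apply, ContinuousLinearMap.smul_apply]
  have : ∀ j : Fin 3,
      (eval fun k => x k) ((pderiv j) P) • (EuclideanSpace.proj j : E3 →L[ℝ] ℝ)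
        (EuclideanSpace.single i 1)
      = if i = j then (eval fun k => x k) ((pderiv j) P) else 0 := by
    intro j
    rcases eq_or_ne i j with h | h
    · subst h; simp [EuclideanSpace.single_apply]
    · simp [EuclideanSpace.single_apply, h, h.symm]
  rw [Finset.sum_congr rfl fun j _ => this j, Finset.sum_ite_eq Finset.univ i]
  simp [pf]

lemma differentiableAt_pf (P : MvP) (x : E3) : DifferentiableAt ℝ (pf P) x :=
  (hasFDerivAt_pf P x).differentiableAt

lemma pd_pf (i : Fin 3) (P : MvP) : pd i (pf P) = pf (pderiv i P) := by
  funext x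
  rw [pd, (hasFDerivAt_pf P x).fderiv, pD_apply_single]

def lapP (P : MvP) : MvP := ∑ i : Fin 3, pderiv i (pderiv i P)

lemma lap_pf (P : MvP) : lap (pf P) = pf (lapP P) := by
  funext x
  simp only [lap, pd_pf, lapP, pf, map_sum]


def R2 : MvP := ∑ i : Fin 3, X i * X i

lemma pf_R2 (x : E3) : pf R2 x = ‖x‖ ^ 2 := by
  have h : ‖x‖ = Real.sqrt (∑ i : Fin 3, ‖x i‖ ^ 2) := EuclideanSpace.norm_eq x
  have h2 : (0:ℝ) ≤ ∑ i : Fin 3, ‖x i‖ ^ 2 :=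
    Finset.sum_nonneg fun i _ => sq_nonneg _
  rw [h, Real.sq_sqrt h2]
  simp [pf, R2, sq, Real.norm_eq_abs, abs_mul_abs_self]

lemma pf_R2_pos {x : E3} (hx : x ≠ 0) : 0 < pf R2 x := by
  rw [pf_R2]; exact pow_pos (norm_pos_iff.2 hx) 2

lemma pderiv_R2 (i : Fin 3) : pderiv i R2 = 2 * X i := by
  rw [R2, map_sum]
  have : ∀ j : Fin 3, pderiv i (X j * X j : MvP)
      = if i = j then 2 * X i else 0 := by
    intro j
    rcases eq_or_ne i j with h | h
    · subst h; simp [pderiv_mul, pderiv_X_self]; ring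
    · simp [pderiv_mul, pderiv_X_of_ne h.symm, h]
  rw [Finset.sum_congr rfl fun j _ => this j, Finset.sum_ite_eq Finset.univ i]
  simp

def G (t : ℤ) : E3 → ℝ := fun x => pf R2 x ^ ((t : ℝ) / 2)

lemma G_eq_zpow (t : ℤ) {x : E3} (hx : x ≠ 0) : G t x = ‖x‖ ^ t := by
  have hn : (0:ℝ) < ‖x‖ := norm_pos_iff.2 hx
  rw [G, pf_R2, ← Real.rpow_natCast ‖x‖ 2, ← Real.rpow_mul hn.le, ← Real.rpow_intCast ‖x‖ t]
  push_cast
  congr 1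
  ring

lemma G_add (a b : ℤ) {x : E3} (hx : x ≠ 0) : G a x * G b x = G (a + b) x := by
  rw [G, G, G, ← Real.rpow_add (pf_R2_pos hx)]
  push_cast
  ring_nf

lemma G_two {x : E3} : G 2 x = pf R2 x := by
  rw [G]; norm_num

lemma G_pos {x : E3} (hx : x ≠ 0) (t : ℤ) : 0 < G t x :=
  Real.rpow_pos_of_pos (pf_R2_pos hx) _

/-- The master differentiability + derivative computation for `G t * pf Q`. -/
lemma master (t : ℤ) (Q : MvP) {x : E3} (hx : x ≠ 0) :
    DifferentiableAt ℝ (fun y => G t y * pf Q y) x ∧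
    ∀ i : Fin 3, pd i (fun y => G t y * pf Q y) x
      = (t : ℝ) * (G (t - 2) x * pf (X i * Q) x) + G t x * pf (pderiv i Q) x := by
  have hN := hasFDerivAt_pf R2 x
  have hG : HasFDerivAt (G t)
      ((((t : ℝ) / 2) * pf R2 x ^ ((t : ℝ) / 2 - 1)) • pD R2 x) x :=
    hN.rpow_const (Or.inl (pf_R2_pos hx).ne')
  have hQ := hasFDerivAt_pf Q x
  have h := hG.mul hQ
  refine ⟨h.differentiableAt, fun i => ?_⟩
  rw [pd, show (fun y => G t y * pf Q y) = G t * pf Q from rfl, h.fderiv]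
  have hexp : pf R2 x ^ ((t : ℝ) / 2 - 1) = G (t - 2) x := by
    rw [G]
    congr 1
    push_cast
    ring
  simp only [ContinuousLinearMap.add_apply, ContinuousLinearMap.smul_apply,
    pD_apply_single, smul_eq_mul, hexp, pderiv_R2]
  have : pf (2 * X i) x = 2 * x i := by simp [pf]
  have hXiQ : pf (X i * Q) x = x i * pf Q x := by simp [pf]
  rw [this, hXiQ]
  ring


lemma degree_sum_univ (d : Fin 3 →₀ ℕ) : ∑ i : Fin 3, d i = d.degree := by
  rw [Finsupp.degree]
  exact (Finset.sum_subset (Finset.subset_univ _)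
    (fun i _ hi => Finsupp.notMem_support_iff.mp hi)).symm

lemma mem_support_degree {P : MvP} {m : ℕ} (hP : P.IsHomogeneous m)
    {d : Fin 3 →₀ ℕ} (hd : d ∈ P.support) : d.degree = m := by
  by_contra h
  exact MvPolynomial.mem_support_iff.mp hd (hP.coeff_eq_zero h)

/-- Euler's identity for homogeneous polynomials. -/
lemma euler {P : MvP} {m : ℕ} (hP : P.IsHomogeneous m) :
    ∑ i : Fin 3, X i * pderiv i P = C (m : ℝ) * P := by
  conv_lhs => rw [P.as_sum]
  conv_rhs => rw [P.as_sum]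
  rw [Finset.mul_sum]
  simp only [map_sum, Finset.mul_sum]
  rw [Finset.sum_comm]
  refine Finset.sum_congr rfl fun d hd => ?_
  have hdeg : d.degree = m := mem_support_degree hP hd
  have key : ∀ i : Fin 3, X i * pderiv i (monomial d (coeff d P))
      = monomial d (coeff d P * d i) := by
    intro i
    rw [pderiv_monomial]
    rcases Nat.eq_zero_or_pos (d i) with h | h
    · simp [h]
    · have hd' : Finsupp.single i 1 + (d - Finsupp.single i 1) = d := by
        ext j
        rcases eq_or_ne j i with rfl | hj
        · simp [Finsupp.single_apply]
          omega
        · simp [Finsupp.single_apply, Ne.symm hj]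
      rw [X, monomial_mul, one_mul, hd']
  have hsum : ∑ i : Fin 3, ((d i : ℝ)) = (m : ℝ) := by
    rw [← Nat.cast_sum, degree_sum_univ, hdeg]
  rw [Finset.sum_congr rfl fun i _ => key i, ← map_sum, ← Finset.mul_sum, hsum,
    C_mul_monomial, mul_comm]


lemma isHomog_pderiv {P : MvP} {m : ℕ} (hP : P.IsHomogeneous m) (i : Fin 3) :
    (pderiv i P).IsHomogeneous (m - 1) := by
  conv => rw [P.as_sum]
  rw [map_sum]
  refine MvPolynomial.IsHomogeneous.sum _ _ _ fun d hd => ?_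
  have hdeg : d.degree = m := mem_support_degree hP hd
  rw [pderiv_monomial]
  rcases Nat.eq_zero_or_pos (d i) with h | h
  · simp [h, isHomogeneous_zero]
  · refine isHomogeneous_monomial _ ?_
    have : d = (d - Finsupp.single i 1) + Finsupp.single i 1 := by
      ext j
      rcases eq_or_ne j i with rfl | hj
      · simp [Finsupp.single_apply]
        omega
      · simp [Finsupp.single_apply, Ne.symm hj]
    have h2 : d.degree = (d - Finsupp.single i 1).degree + 1 := by
      conv_lhs => rw [this]
      rw [← degree_sum_univ, ← degree_sum_univ]
      have : ∀ j : Fin 3, (((d - Finsupp.single i 1) + Finsupp.single i 1 : Fin 3 →₀ ℕ)) j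
          = ((d - Finsupp.single i 1 : Fin 3 →₀ ℕ)) j + (if i = j then 1 else 0) := by
        intro j
        rcases eq_or_ne i j with rfl | hj
        · simp [Finsupp.single_apply]
        · simp [Finsupp.single_apply, hj]
      rw [Finset.sum_congr rfl fun j _ => this j, Finset.sum_add_distrib,
        Finset.sum_ite_eq Finset.univ i fun _ => 1]
      simp
    omega

lemma isHomog_lapP {P : MvP} {m : ℕ} (hP : P.IsHomogeneous m) :
    (lapP P).IsHomogeneous (m - 2) := by
  rw [lapP]
  refine MvPolynomial.IsHomogeneous.sum _ _ _ fun i _ => ?_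
  have := isHomog_pderiv (isHomog_pderiv hP i) i
  rwa [Nat.sub_sub] at this

lemma eq_C_of_isHomog_zero {Q : MvP} (hQ : Q.IsHomogeneous 0) : Q = C (coeff 0 Q) := by
  ext d
  rcases eq_or_ne d 0 with rfl | hd
  · simp
  · rw [hQ.coeff_eq_zero (by rwa [Ne, Finsupp.degree_eq_zero_iff])]
    rw [coeff_C, if_neg (Ne.symm hd)]

lemma lapP_eq_zero {Q : MvP} {d : ℕ} (hQ : Q.IsHomogeneous d) (hd : d ≤ 1) : lapP Q = 0 := by
  rw [lapP]
  refine Finset.sum_eq_zero fun i _ => ?_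
  have h1 : (pderiv i Q).IsHomogeneous 0 := by
    have := isHomog_pderiv hQ i
    interval_cases d <;> simpa using this
  rw [eq_C_of_isHomog_zero h1, pderiv_C]

lemma lapP_add (P Q : MvP) : lapP (P + Q) = lapP P + lapP Q := by
  simp [lapP, Finset.sum_add_distrib]

lemma lapP_C_mul (c : ℝ) (P : MvP) : lapP (C c * P) = C c * lapP P := by
  simp [lapP, pderiv_C_mul, Finset.mul_sum]

/-- Commutator identity: `Δ(r² Q) = (4d+6) Q + r² ΔQ` for `Q` homogeneous of degree `d`. -/
lemma lapP_R2_mul {Q : MvP} {d : ℕ} (hQ : Q.IsHomogeneous d) :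
    lapP (R2 * Q) = C ((4 * d + 6 : ℕ) : ℝ) * Q + R2 * lapP Q := by
  have h1 : ∀ i : Fin 3, pderiv i (R2 * Q) = 2 * X i * Q + R2 * pderiv i Q := by
    intro i
    rw [pderiv_mul, pderiv_R2]
  have h2 : ∀ i : Fin 3, pderiv i (pderiv i (R2 * Q))
      = 2 * Q + 4 * (X i * pderiv i Q) + R2 * pderiv i (pderiv i Q) := by
    intro i
    rw [h1 i, show (2 : MvP) * X i * Q = X i * Q + X i * Q by ring]
    simp only [map_add, pderiv_mul, pderiv_X_self, pderiv_R2]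
    ring
  have h3 : lapP (R2 * Q)
      = ∑ i : Fin 3, (2 * Q + 4 * (X i * pderiv i Q) + R2 * pderiv i (pderiv i Q)) := by
    rw [lapP]
    exact Finset.sum_congr rfl fun i _ => h2 i
  have e1 : ∑ _i : Fin 3, (2 : MvP) * Q = 6 * Q := by
    rw [Finset.sum_const, Finset.card_univ, Fintype.card_fin, nsmul_eq_mul]
    push_cast
    ring
  have e2 : ∑ i : Fin 3, (4 : MvP) * (X i * pderiv i Q) = 4 * (C (d : ℝ) * Q) := by
    rw [← Finset.mul_sum, euler hQ]
  have e3 : ∑ i : Fin 3, R2 * pderiv i (pderiv i Q) = R2 * lapP Q := by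
    rw [← Finset.mul_sum]
    rfl
  rw [h3, Finset.sum_add_distrib, Finset.sum_add_distrib, e1, e2, e3,
    show ((4 * d + 6 : ℕ) : ℝ) = 4 * (d : ℝ) + 6 by push_cast; ring,
    map_add, map_mul]
  simp only [map_ofNat]
  ring


lemma lapP_zero : lapP 0 = 0 := by simp [lapP]

lemma ck_ne_zero (m : ℕ) (s : ℤ) (hs : s < 0) (hodd : Odd |s|) (hms : 0 ≤ (m : ℤ) + s)
    (k : ℕ) (hk : 2 * k ≤ m) :
    (s * (s + 1 + 2 * m) + 2 * k * (2 * m + 1 - 2 * k) : ℤ) ≠ 0 := by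
  obtain ⟨j, hj⟩ := hodd
  rw [abs_of_neg hs] at hj
  have hfact : (s * (s + 1 + 2 * m) + 2 * k * (2 * m + 1 - 2 * k) : ℤ)
      = (2 * k + s) * (2 * m + 1 - 2 * k + s) := by ring
  rw [hfact]
  exact mul_ne_zero (by omega) (by omega)

lemma T_inj (m : ℕ) (s : ℤ) (hs : s < 0) (hodd : Odd |s|) (hms : 0 ≤ (m : ℤ) + s)
    (P : MvP) (hP : P.IsHomogeneous m)
    (hT : C ((s * (s + 1 + 2 * m) : ℤ) : ℝ) * P + R2 * lapP P = 0) : P = 0 := by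
  set k0 := m / 2 with hk0
  have hhom : ∀ k : ℕ, (lapP^[k] P).IsHomogeneous (m - 2 * k) := by
    intro k
    induction k with
    | zero => simpa using hP
    | succ k ih =>
      rw [Function.iterate_succ_apply']
      have := isHomog_lapP ih
      have heq : m - 2 * k - 2 = m - 2 * (k + 1) := by omega
      rwa [heq] at this
  have hfwd : ∀ k : ℕ, 2 * k ≤ m →
      C ((s * (s + 1 + 2 * m) + 2 * k * (2 * m + 1 - 2 * k) : ℤ) : ℝ) * lapP^[k] P
        + R2 * lapP^[k + 1] P = 0 := by
    intro k
    induction k with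
    | zero =>
      intro _
      simpa using hT
    | succ k ih =>
      intro hk
      have hk' : 2 * k ≤ m := by omega
      have h := congrArg lapP (ih hk')
      rw [lapP_add, lapP_C_mul, lapP_zero] at h
      rw [show lapP (lapP^[k] P) = lapP^[k + 1] P from
        (Function.iterate_succ_apply' lapP k P).symm] at h
      rw [lapP_R2_mul (hhom (k + 1))] at h
      rw [show lapP (lapP^[k + 1] P) = lapP^[k + 1 + 1] P from
        (Function.iterate_succ_apply' lapP (k + 1) P).symm] at h
      have hcast : ∀ z : ℤ, (C ((z : ℝ)) : MvP) = (z : MvP) := fun z => by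
        simp
      have hcast2 : ∀ n : ℕ, (C ((n : ℝ)) : MvP) = (n : MvP) := fun n => by
        simp
      simp only [hcast, hcast2] at h ⊢
      push_cast [Nat.cast_sub hk] at h ⊢
      linear_combination h
  have hlast : lapP^[k0 + 1] P = 0 := by
    rw [Function.iterate_succ_apply']
    exact lapP_eq_zero (hhom k0) (by omega)
  have hback : ∀ n : ℕ, n ≤ k0 + 1 → lapP^[k0 + 1 - n] P = 0 := by
    intro n
    induction n with
    | zero => intro _; simpa using hlast
    | succ n ih =>
      intro hn
      have h1 := ih (by omega)
      have hKle : 2 * (k0 - n) ≤ m := by omega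
      have h2 := hfwd (k0 - n) hKle
      have hk : k0 - n + 1 = k0 + 1 - n := by omega
      rw [hk, h1, mul_zero, add_zero] at h2
      have hc := Int.cast_ne_zero (α := ℝ) |>.mpr (ck_ne_zero m s hs hodd hms (k0 - n) hKle)
      have hz := (mul_eq_zero.mp h2).resolve_left (fun hC =>
        hc (by
          have hcc := congrArg (MvPolynomial.coeff 0) hC
          rwa [MvPolynomial.coeff_C, if_pos rfl, MvPolynomial.coeff_zero] at hcc))
      rw [show k0 + 1 - (n + 1) = k0 - n by omega]
      exact hz
  have hfin := hback (k0 + 1) le_rfl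
  simpa using hfin


def Tlin (c : ℝ) : MvP →ₗ[ℝ] MvP where
  toFun P := C c * P + R2 * lapP P
  map_add' P Q := by simp only [lapP_add]; ring
  map_smul' a P := by
    simp only [RingHom.id_apply, smul_eq_C_mul, lapP_C_mul]
    ring

lemma isHomog_R2 : (R2 : MvP).IsHomogeneous 2 := by
  rw [R2]
  exact MvPolynomial.IsHomogeneous.sum _ _ _ fun i _ =>
    (isHomogeneous_X ℝ i).mul (isHomogeneous_X ℝ i)

lemma Tlin_mem (c : ℝ) (m : ℕ) {P : MvP} (hP : P.IsHomogeneous m) :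
    (Tlin c P).IsHomogeneous m := by
  show (C c * P + R2 * lapP P).IsHomogeneous m
  refine (hP.C_mul c).add ?_
  rcases le_or_gt 2 m with h | h
  · have := isHomog_R2.mul (isHomog_lapP hP)
    rwa [show 2 + (m - 2) = m by omega] at this
  · rw [lapP_eq_zero hP (by omega), mul_zero]
    exact isHomogeneous_zero _ _ _

lemma fd (m : ℕ) : FiniteDimensional ℝ (homogeneousSubmodule (Fin 3) ℝ m) := by
  have hle : homogeneousSubmodule (Fin 3) ℝ m ≤ restrictTotalDegree (Fin 3) ℝ m := by
    intro P hP
    rw [mem_restrictTotalDegree]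
    exact ((mem_homogeneousSubmodule _ _).mp hP).totalDegree_le
  exact Submodule.finiteDimensional_of_le hle

lemma T_surj (m : ℕ) (s : ℤ) (hs : s < 0) (hodd : Odd |s|) (hms : 0 ≤ (m : ℤ) + s)
    (Q : MvP) (hQ : Q.IsHomogeneous m) :
    ∃ P : MvP, P.IsHomogeneous m ∧
      C ((s * (s + 1 + 2 * m) : ℤ) : ℝ) * P + R2 * lapP P = Q := by
  set c : ℝ := ((s * (s + 1 + 2 * m) : ℤ) : ℝ) with hc
  have := fd m
  have hmem : ∀ x ∈ homogeneousSubmodule (Fin 3) ℝ m,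
      Tlin c x ∈ homogeneousSubmodule (Fin 3) ℝ m := fun x hx =>
    (mem_homogeneousSubmodule _ _).mpr (Tlin_mem c m ((mem_homogeneousSubmodule _ _).mp hx))
  set T' := (Tlin c).restrict hmem with hT'
  have hinj : Function.Injective T' := by
    refine (injective_iff_map_eq_zero T').mpr ?_
    rintro ⟨P, hP⟩ h0
    have h1 : Tlin c P = 0 := congrArg Subtype.val h0
    have h2 := T_inj m s hs hodd hms P ((mem_homogeneousSubmodule _ _).mp hP) h1
    exact Subtype.ext h2
  have hsurj := LinearMap.injective_iff_surjective.mp hinj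
  obtain ⟨⟨P, hP⟩, hTP⟩ := hsurj ⟨Q, (mem_homogeneousSubmodule _ _).mpr hQ⟩
  refine ⟨P, (mem_homogeneousSubmodule _ _).mp hP, ?_⟩
  exact congrArg Subtype.val hTP


lemma pf_sum (f : Fin 3 → MvP) (x : E3) : ∑ i, pf (f i) x = pf (∑ i, f i) x := by
  simp [pf]

lemma pd_congr (i : Fin 3) {f g : E3 → ℝ} {x : E3} (hx : x ≠ 0)
    (h : ∀ y : E3, y ≠ 0 → f y = g y) : pd i f x = pd i g x := by
  have hU : IsOpen {y : E3 | y ≠ 0} := isOpen_ne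
  have hfg : f =ᶠ[nhds x] g := Filter.eventually_of_mem (hU.mem_nhds hx) h
  rw [pd, pd, hfg.fderiv_eq]

lemma lap_congr {f g : E3 → ℝ} {x : E3} (hx : x ≠ 0)
    (h : ∀ y : E3, y ≠ 0 → f y = g y) : lap f x = lap g x := by
  rw [lap, lap]
  exact Finset.sum_congr rfl fun i _ =>
    pd_congr i hx fun y hy => pd_congr i hy h

lemma lap_main (m : ℕ) (s : ℤ) {P : MvP} (hP : P.IsHomogeneous m) {x : E3} (hx : x ≠ 0) :
    lap (fun y => ‖y‖ ^ s * pf P y) x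
      = ‖x‖ ^ (s - 2) * pf (C ((s * (s + 1 + 2 * m) : ℤ) : ℝ) * P + R2 * lapP P) x := by
  have step1 : lap (fun y => ‖y‖ ^ s * pf P y) x = lap (fun y => G s y * pf P y) x :=
    lap_congr hx fun y hy => by rw [G_eq_zpow s hy]
  rw [step1, lap]
  have hdi : ∀ i : Fin 3, pd i (pd i (fun y => G s y * pf P y)) x
      = (s : ℝ) * ((s - 2 : ℝ) * (G (s - 4) x * pf (X i * (X i * P)) x)
          + G (s - 2) x * pf (pderiv i (X i * P)) x)
        + ((s : ℝ) * (G (s - 2) x * pf (X i * pderiv i P) x)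
          + G s x * pf (pderiv i (pderiv i P)) x) := by
    intro i
    have e1 : pd i (pd i (fun y => G s y * pf P y)) x
        = pd i (fun y => (s : ℝ) * (G (s - 2) y * pf (X i * P) y)
            + G s y * pf (pderiv i P) y) x := by
      refine pd_congr i hx fun y hy => ?_
      exact (master s P hy).2 i
    have d1 : DifferentiableAt ℝ (fun y => G (s - 2) y * pf (X i * P) y) x :=
      (master _ _ hx).1
    have d2 : DifferentiableAt ℝ (fun y => G s y * pf (pderiv i P) y) x :=
      (master _ _ hx).1
    rw [e1, pd, fderiv_fun_add (d1.const_mul ((s : ℝ))) d2, fderiv_const_mul d1]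
    have m1 := (master (s - 2) (X i * P) hx).2 i
    have m2 := (master s (pderiv i P) hx).2 i
    rw [pd] at m1 m2
    simp only [ContinuousLinearMap.add_apply, ContinuousLinearMap.smul_apply, smul_eq_mul]
    rw [m1, m2]
    rw [show s - 2 - 2 = s - 4 by ring]
    push_cast
    ring
  rw [Finset.sum_congr rfl fun i _ => hdi i]
  -- consolidate sums
  have hps : ∀ i : Fin 3, pderiv i (X i * P) = P + X i * pderiv i P := by
    intro i
    rw [pderiv_mul, pderiv_X_self, one_mul]
  have sum1 : ∑ i : Fin 3, pf (X i * (X i * P)) x = pf (R2 * P) x := by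
    rw [pf_sum]
    congr 1
    rw [R2, Finset.sum_mul]
    exact Finset.sum_congr rfl fun i _ => (mul_assoc _ _ _).symm
  have sum2 : ∑ i : Fin 3, pf (pderiv i (X i * P)) x = (3 + (m : ℝ)) * pf P x := by
    rw [pf_sum]
    have : ∑ i : Fin 3, pderiv i (X i * P) = (3 : MvP) * P + C (m : ℝ) * P := by
      rw [Finset.sum_congr rfl fun i _ => hps i, Finset.sum_add_distrib, euler hP,
        Finset.sum_const, Finset.card_univ, Fintype.card_fin, nsmul_eq_mul]
      push_cast
      ring
    rw [this]
    simp [pf]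
    ring
  have sum3 : ∑ i : Fin 3, pf (X i * pderiv i P) x = (m : ℝ) * pf P x := by
    rw [pf_sum, euler hP]
    simp [pf]
  have sum4 : ∑ i : Fin 3, pf (pderiv i (pderiv i P)) x = pf (lapP P) x := by
    rw [pf_sum, lapP]
  have expand : ∀ i : Fin 3,
      (s : ℝ) * ((s - 2 : ℝ) * (G (s - 4) x * pf (X i * (X i * P)) x)
          + G (s - 2) x * pf (pderiv i (X i * P)) x)
        + ((s : ℝ) * (G (s - 2) x * pf (X i * pderiv i P) x)
          + G s x * pf (pderiv i (pderiv i P)) x)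
      = ((s : ℝ) * ((s : ℝ) - 2) * G (s - 4) x) * pf (X i * (X i * P)) x
        + ((s : ℝ) * G (s - 2) x) * pf (pderiv i (X i * P)) x
        + ((s : ℝ) * G (s - 2) x) * pf (X i * pderiv i P) x
        + G s x * pf (pderiv i (pderiv i P)) x := fun i => by ring
  rw [Finset.sum_congr rfl fun i _ => expand i, Finset.sum_add_distrib,
    Finset.sum_add_distrib, Finset.sum_add_distrib, ← Finset.mul_sum, ← Finset.mul_sum,
    ← Finset.mul_sum, ← Finset.mul_sum, sum1, sum2, sum3, sum4]
  have hA : ‖x‖ ^ (s - 2) = G (s - 2) x := (G_eq_zpow _ hx).symm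
  have h1 : G (s - 4) x * pf R2 x = G (s - 2) x := by
    rw [← G_two (x := x), G_add _ _ hx, show s - 4 + 2 = s - 2 by ring]
  have h2 : G s x = G (s - 2) x * pf R2 x := by
    rw [← G_two (x := x), G_add _ _ hx, show s - 2 + 2 = s by ring]
  have hpf1 : pf (R2 * P) x = pf R2 x * pf P x := by simp [pf]
  have hpf2 : pf (C ((s * (s + 1 + 2 * m) : ℤ) : ℝ) * P + R2 * lapP P) x
      = ((s * (s + 1 + 2 * m) : ℤ) : ℝ) * pf P x + pf R2 x * pf (lapP P) x := by
    simp [pf]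
  rw [hA, hpf1, hpf2, h2]
  push_cast
  linear_combination ((s : ℝ) * ((s : ℝ) - 2) * pf P x) * h1


lemma eval_zero_homog {R : MvP} {n : ℕ} (h : R.IsHomogeneous n) (hn : n ≠ 0) :
    MvPolynomial.eval (0 : Fin 3 → ℝ) R = 0 := by
  have hc := h.coeff_eq_zero (d := 0) (by
    rw [map_zero]
    exact Ne.symm hn)
  rw [eval_zero]
  simpa [MvPolynomial.constantCoeff_eq] using hc

end S2

/-- for `s < 0` with `|s|` odd and `m + s ≥ 0`, the map
`p ↦ s(s+1+2m)p + ‖x‖²Δp` on homogeneous polynomials of degree `m` is bijective;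
i.e. for every homogeneous polynomial `q` of degree `m` there is a unique homogeneous
polynomial `p` of degree `m` with `Δ(‖x‖^s p) = ‖x‖^(s-2) q` on `ℝ³ \\ {0}`. -/
theorem stmt_2 (m : ℕ) (s : ℤ) (hs : s < 0) (hodd : Odd |s|) (hms : 0 ≤ (m : ℤ) + s)
    (q : E3 → ℝ) (hq : IsHomogPoly m q) :
    ∃! p : E3 → ℝ, IsHomogPoly m p ∧
      ∀ x : E3, x ≠ 0 →
        lap (fun y => ‖y‖ ^ s * p y) x = ‖x‖ ^ (s - 2) * q x := by
  classical
  obtain ⟨Q, hQhom, hq⟩ := hq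
  have hm1 : 1 ≤ m := by omega
  obtain ⟨P, hPhom, hTP⟩ := S2.T_surj m s hs hodd hms Q hQhom
  set c : ℝ := ((s * (s + 1 + 2 * m) : ℤ) : ℝ) with hc
  refine ⟨S2.pf P, ⟨⟨P, hPhom, fun _ => rfl⟩, fun x hxne => ?_⟩, ?_⟩
  · rw [S2.lap_main m s hPhom hxne, hTP, hq x]; rfl
  · rintro p' ⟨⟨P', hP'hom, hp'⟩, hpde⟩
    have key : ∀ x : E3, x ≠ 0 →
        MvPolynomial.eval (fun i => x i)
          (MvPolynomial.C c * P' + S2.R2 * S2.lapP P')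
          = MvPolynomial.eval (fun i => x i) Q := by
      intro x hxne
      have h0 := hpde x hxne
      have hfun : (fun y => ‖y‖ ^ s * p' y) = fun y => ‖y‖ ^ s * S2.pf P' y := by
        funext y
        rw [hp' y]
        rfl
      rw [hfun, S2.lap_main m s hP'hom hxne, hq x] at h0
      exact mul_left_cancel₀ (zpow_ne_zero _ (norm_ne_zero_iff.mpr hxne)) h0
    have hhom1 : (MvPolynomial.C c * P' + S2.R2 * S2.lapP P').IsHomogeneous m :=
      S2.Tlin_mem c m hP'hom
    have hpoly : MvPolynomial.C c * P' + S2.R2 * S2.lapP P' = Q := by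
      apply MvPolynomial.funext
      intro v
      rcases eq_or_ne v 0 with rfl | hv
      · rw [S2.eval_zero_homog hhom1 (by omega), S2.eval_zero_homog hQhom (by omega)]
      · exact key (WithLp.toLp 2 v) (fun h => hv (by simpa using congrArg WithLp.ofLp h))
    have hPP : P' = P := by
      have hlapsub : S2.lapP (P' - P) = S2.lapP P' - S2.lapP P := by
        simp [S2.lapP, Finset.sum_sub_distrib]
      have hsub : MvPolynomial.C c * (P' - P) + S2.R2 * S2.lapP (P' - P) = 0 := by
        rw [hlapsub]
        linear_combination hpoly - hTP
      have := S2.T_inj m s hs hodd hms (P' - P) (hP'hom.sub hPhom) hsub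
      exact sub_eq_zero.mp this
    funext x'
    rw [hp' x', hPP]
    rfl
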